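/- arXiv:2501.15550 — 5 statements merged into one kernel-verified Lean document; each statement's English description precedes it below -/
import Mathlib

section
/- For any n₁, ..., n_k ≥ 0 and matrices L = [[1,1],[0,1]], R = [[1,0],[1,1]], the trace of L(LR)^{n₁}R · L(LR)^{n₂}R ⋯ L(LR)^{n_k}R equals (1/(10^k · 2^{n₁+⋯+n_k})) · trace(A₁ ⋯ A_k), where A_l = [[3(ξ̄+2)ξ̄^{n_l}, 2(ξ+2)ξ^{n_l}],[2(ξ̄+2)ξ̄^{n_l}, 3(ξ+2)ξ^{n_l}]] with ξ = 3+√5, ξ̄ = 3-√5. -/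
open Matrix Real

noncomputable section

def Lm : Matrix (Fin 2) (Fin 2) ℝ := !![1,1;0,1]
def Rm : Matrix (Fin 2) (Fin 2) ℝ := !![1,0;1,1]

noncomputable def Am (m : ℕ) : Matrix (Fin 2) (Fin 2) ℝ :=
  !![3 * ((3 - Real.sqrt 5) + 2) * (3 - Real.sqrt 5) ^ m,
     2 * ((3 + Real.sqrt 5) + 2) * (3 + Real.sqrt 5) ^ m;
     2 * ((3 - Real.sqrt 5) + 2) * (3 - Real.sqrt 5) ^ m,
     3 * ((3 + Real.sqrt 5) + 2) * (3 + Real.sqrt 5) ^ m]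

noncomputable def Tm : Matrix (Fin 2) (Fin 2) ℝ :=
  !![2, -(3 + Real.sqrt 5); -(3 + Real.sqrt 5), 2]

noncomputable def Tinv : Matrix (Fin 2) (Fin 2) ℝ :=
  !![1/4 - 3 * Real.sqrt 5 / 20, -(Real.sqrt 5) / 10;
     -(Real.sqrt 5) / 10, 1/4 - 3 * Real.sqrt 5 / 20]

noncomputable def Em : Matrix (Fin 2) (Fin 2) ℝ :=
  !![3 - Real.sqrt 5, 0; 0, 3 + Real.sqrt 5]

def Gm : Matrix (Fin 2) (Fin 2) ℝ := !![3,1;-1,0]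

lemma hs5 : Real.sqrt 5 ^ 2 = 5 := Real.sq_sqrt (by norm_num)

lemma hTinvT : Tinv * Tm = 1 := by
  have h := hs5
  rw [Tinv, Tm]
  ext i j
  fin_cases i <;> fin_cases j <;>
    simp [Matrix.mul_apply, Fin.sum_univ_two, Matrix.one_apply] <;> nlinarith [h]

lemma hAE (m : ℕ) : Am (m + 1) = Am m * Em := by
  rw [Am, Am, Em]
  ext i j
  fin_cases i <;> fin_cases j <;>
    simp [Matrix.mul_apply, Fin.sum_univ_two] <;> ring

lemma hLRT : (Lm * Rm) * Tm = (1/10 : ℝ) • (Tm * Am 0) := by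
  have h := hs5
  rw [Lm, Rm, Tm, Am]
  ext i j
  fin_cases i <;> fin_cases j <;>
    simp [Matrix.mul_apply, Fin.sum_univ_two] <;> nlinarith [h]

lemma hGT : Gm * Tm = (1/2 : ℝ) • (Tm * Em) := by
  have h := hs5
  rw [Gm, Tm, Em]
  ext i j
  fin_cases i <;> fin_cases j <;>
    simp [Matrix.mul_apply, Fin.sum_univ_two] <;> nlinarith [h]

lemma hRG : Rm * Gm = Lm * Rm * Rm := by
  rw [Lm, Rm, Gm]
  ext i j
  fin_cases i <;> fin_cases j <;>
    simp [Matrix.mul_apply, Fin.sum_univ_two] <;> norm_num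

lemma hF (m : ℕ) : Lm * (Lm * Rm) ^ m * Rm * Tm = (1/(10 * 2^m) : ℝ) • (Tm * Am m) := by
  induction m with
  | zero => simpa using hLRT
  | succ m ih =>
    have step : Lm * (Lm * Rm) ^ (m+1) * Rm = Lm * (Lm * Rm) ^ m * Rm * Gm := by
      rw [mul_assoc _ Rm Gm, hRG, pow_succ]
      simp only [mul_assoc]
    rw [step, mul_assoc, hGT, Matrix.mul_smul, ← mul_assoc, ih, Matrix.smul_mul,
      smul_smul, mul_assoc, ← hAE]
    congr 1
    rw [pow_succ]
    ring

lemma key : ∀ (ns : List ℕ),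
    (ns.map (fun m => Lm * (Lm * Rm) ^ m * Rm)).prod * Tm =
      (1/(10 ^ ns.length * 2 ^ ns.sum) : ℝ) • (Tm * (ns.map Am).prod)
  | [] => by simp
  | m :: ns => by
    simp only [List.map_cons, List.prod_cons, List.length_cons, List.sum_cons]
    rw [mul_assoc, key ns, Matrix.mul_smul, ← mul_assoc, hF, Matrix.smul_mul,
      smul_smul, mul_assoc]
    congr 1
    rw [pow_succ, pow_add]
    ring

theorem stmt_3 (k : ℕ) (n : Fin k → ℕ) :
    Matrix.trace (List.ofFn (fun l => Lm * (Lm * Rm) ^ (n l) * Rm)).prod =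
      (1 / (10 ^ k * 2 ^ (∑ l, n l))) *
        Matrix.trace (List.ofFn (fun l => Am (n l))).prod := by
  have hTT : Tm * Tinv = 1 := mul_eq_one_comm.mpr hTinvT
  have h := key (List.ofFn n)
  rw [List.map_ofFn, List.map_ofFn, List.length_ofFn, List.sum_ofFn] at h
  simp only [Function.comp_def] at h
  have hP : (List.ofFn (fun l => Lm * (Lm * Rm) ^ (n l) * Rm)).prod =
      (1/(10 ^ k * 2 ^ (∑ l, n l)) : ℝ) •
        (Tm * (List.ofFn (fun l => Am (n l))).prod * Tinv) := by
    calc (List.ofFn (fun l => Lm * (Lm * Rm) ^ (n l) * Rm)).prod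
        = (List.ofFn (fun l => Lm * (Lm * Rm) ^ (n l) * Rm)).prod * (Tm * Tinv) := by
          rw [hTT, mul_one]
      _ = ((List.ofFn (fun l => Lm * (Lm * Rm) ^ (n l) * Rm)).prod * Tm) * Tinv := by
          rw [mul_assoc]
      _ = _ := by
          rw [h, Matrix.smul_mul]
  rw [hP, Matrix.trace_smul, smul_eq_mul]
  congr 1
  rw [Matrix.trace_mul_cycle, hTinvT, one_mul]
end
end

section
/- Let (n₁,...,n_k) be a sequence of integers with small variation containing values m and m+1. Then the occurrences of the less frequent value are isolated: no two cyclically adjacent entries both equal the less frequent value. -/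
/-- A cyclic sequence `n : ZMod k → ℤ` has *small variation* if every two cyclic
blocks of the same size have sums differing by at most `1`. -/
def SmallVariation {k : ℕ} [NeZero k] (n : ZMod k → ℤ) : Prop :=
  ∀ (s : ℕ) (i₀ j₀ : ZMod k),
    |(∑ t ∈ Finset.range (s + 1), n (i₀ + t)) -
      (∑ t ∈ Finset.range (s + 1), n (j₀ + t))| ≤ 1

lemma pair_bound {k : ℕ} [NeZero k] (n : ZMod k → ℤ) (h : SmallVariation n)
    (i j : ZMod k) : |(n i + n (i + 1)) - (n j + n (j + 1))| ≤ 1 := by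
  have := h 1 i j
  simpa [Finset.sum_range_succ] using this

lemma shift_sum {k : ℕ} [NeZero k] (n : ZMod k → ℤ) :
    ∑ i : ZMod k, n (i + 1) = ∑ i : ZMod k, n i :=
  Fintype.sum_equiv (Equiv.addRight 1) _ _ (fun i => rfl)

theorem stmt_13 {k : ℕ} [NeZero k] (n : ZMod k → ℤ) (m : ℤ)
    (h : SmallVariation n)
    (hval : ∀ i, n i = m ∨ n i = m + 1)
    (hm : ∃ i, n i = m) (hm1 : ∃ i, n i = m + 1) :
    ((Finset.univ.filter (fun i : ZMod k => n i = m)).card <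
        (Finset.univ.filter (fun i : ZMod k => n i = m + 1)).card →
      ∀ i : ZMod k, n i = m → n (i + 1) ≠ m) ∧
    ((Finset.univ.filter (fun i : ZMod k => n i = m + 1)).card <
        (Finset.univ.filter (fun i : ZMod k => n i = m)).card →
      ∀ i : ZMod k, n i = m + 1 → n (i + 1) ≠ m + 1) := by
  set A := Finset.univ.filter (fun i : ZMod k => n i = m) with hA
  set B := Finset.univ.filter (fun i : ZMod k => n i = m + 1) with hB
  have hcompl : Finset.univ.filter (fun i : ZMod k => ¬ n i = m) = B := by
    apply Finset.filter_congr
    intro i _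
    rcases hval i with h1 | h1 <;> simp [h1]
  have hAB : A.card + B.card = k := by
    rw [hA, ← hcompl]
    rw [Finset.card_filter_add_card_filter_not]
    simp [ZMod.card]
  have hsum : ∑ i : ZMod k, n i = (A.card : ℤ) * m + (B.card : ℤ) * (m + 1) := by
    rw [← Finset.sum_filter_add_sum_filter_not Finset.univ (fun i => n i = m), hcompl]
    congr 1
    · rw [Finset.sum_congr rfl (fun i hi => (Finset.mem_filter.mp hi).2)]
      simp [mul_comm, hA]
    · rw [Finset.sum_congr rfl (fun i hi => (Finset.mem_filter.mp hi).2)]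
      simp [mul_comm, hB]
  have hdouble : ∑ i : ZMod k, (n i + n (i + 1)) = 2 * ∑ i : ZMod k, n i := by
    rw [Finset.sum_add_distrib, shift_sum]; ring
  constructor
  · intro hlt i hi hi1
    -- all pairs ≤ 2m+1
    have hub : ∀ j : ZMod k, n j + n (j + 1) ≤ 2 * m + 1 := by
      intro j
      have := pair_bound n h j i
      rw [hi, hi1] at this
      have := abs_le.mp this
      linarith [this.1, this.2]
    have hsumle : ∑ j : ZMod k, (n j + n (j + 1)) ≤ (k : ℤ) * (2 * m + 1) := by
      calc ∑ j : ZMod k, (n j + n (j + 1)) ≤ ∑ _j : ZMod k, (2 * m + 1) :=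
            Finset.sum_le_sum (fun j _ => hub j)
        _ = (k : ℤ) * (2 * m + 1) := by simp [ZMod.card, mul_comm]
    rw [hdouble, hsum] at hsumle
    have hk : ((A.card : ℤ) + B.card) = (k : ℤ) := by exact_mod_cast hAB
    have hlt' : (A.card : ℤ) < B.card := by exact_mod_cast hlt
    have e : (2:ℤ) * ((A.card : ℤ) * m + (B.card : ℤ) * (m + 1))
        = (k : ℤ) * (2 * m + 1) + ((B.card : ℤ) - A.card) := by rw [← hk]; ring
    linarith
  · intro hlt i hi hi1
    have hub : ∀ j : ZMod k, 2 * m + 1 ≤ n j + n (j + 1) := by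
      intro j
      have := pair_bound n h j i
      rw [hi, hi1] at this
      have := abs_le.mp this
      linarith [this.1, this.2]
    have hsumle : (k : ℤ) * (2 * m + 1) ≤ ∑ j : ZMod k, (n j + n (j + 1)) := by
      calc (k : ℤ) * (2 * m + 1) = ∑ _j : ZMod k, (2 * m + 1) := by
            simp [ZMod.card, mul_comm]
        _ ≤ ∑ j : ZMod k, (n j + n (j + 1)) := Finset.sum_le_sum (fun j _ => hub j)
    rw [hdouble, hsum] at hsumle
    have hk : ((A.card : ℤ) + B.card) = (k : ℤ) := by exact_mod_cast hAB
    have hlt' : (B.card : ℤ) < A.card := by exact_mod_cast hlt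
    have e : (2:ℤ) * ((A.card : ℤ) * m + (B.card : ℤ) * (m + 1))
        = (k : ℤ) * (2 * m + 1) + ((B.card : ℤ) - A.card) := by rw [← hk]; ring
    linarith
end

section
/- A necklace of positive integers [n₁,...,n_k] has small variation if and only if its image under Θ — the necklace consisting of (n₁−1) zeros, a one, (n₂−1) zeros, a one, ..., (n_k−1) zeros, a one — has small variation. -/
/-- A finite list of integers, viewed as a cyclic sequence, has *small variation* if
every two cyclic blocks of the same size have sums differing by at most `1`.
Indices are taken modulo the length. -/
def SmallVariationList (l : List ℤ) : Prop :=
  ∀ (s i₀ j₀ : ℕ),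
    |(∑ t ∈ Finset.range (s + 1), l.getD ((i₀ + t) % l.length) 0) -
      (∑ t ∈ Finset.range (s + 1), l.getD ((j₀ + t) % l.length) 0)| ≤ 1

namespace SV14

/-- generic window-sum / telescoping lemma -/
lemma window (f : ℕ → ℤ) (x L : ℕ) :
    ∑ t ∈ Finset.range L, f (x + t) =
      (∑ t ∈ Finset.range (x + L), f t) - ∑ t ∈ Finset.range x, f t := by
  induction L with
  | zero => simp
  | succ L ih =>
      rw [Finset.sum_range_succ, ih, show x + (L + 1) = (x + L) + 1 by omega,
        Finset.sum_range_succ]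
      ring

variable (k : ℕ) (hk : 0 < k) (n : Fin k → ℕ)

/-- periodic extension of `n` -/
def nu : ℕ → ℕ := fun t => n ⟨t % k, Nat.mod_lt t hk⟩

/-- prefix sums of the periodic extension -/
def PP : ℕ → ℕ := fun m => ∑ t ∈ Finset.range m, nu k hk n t

def blocks : List (List ℤ) :=
  List.ofFn (fun i => List.replicate (n i - 1) (0 : ℤ) ++ [1])

def L2 : List ℤ := (blocks k n).flatten

lemma nu_eq (t : ℕ) (ht : t < k) : nu k hk n t = n ⟨t, ht⟩ := by
  unfold nu; congr 1; exact Fin.ext (Nat.mod_eq_of_lt ht)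

lemma nu_pos (hn : ∀ i, 1 ≤ n i) (t : ℕ) : 1 ≤ nu k hk n t := hn _

lemma nu_period (t : ℕ) : nu k hk n (t + k) = nu k hk n t := by
  unfold nu; congr 1; exact Fin.ext (Nat.add_mod_right t k)

lemma PP_zero : PP k hk n 0 = 0 := by simp [PP]

lemma PP_succ (m : ℕ) : PP k hk n (m + 1) = PP k hk n m + nu k hk n m := by
  simp [PP, Finset.sum_range_succ]

lemma PP_mono {m m' : ℕ} (h : m ≤ m') : PP k hk n m ≤ PP k hk n m' := by
  unfold PP
  exact Finset.sum_le_sum_of_subset (Finset.range_subset_range.2 h)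

lemma PP_strict (hn : ∀ i, 1 ≤ n i) {m m' : ℕ} (h : m < m') :
    PP k hk n m < PP k hk n m' := by
  have h1 : PP k hk n (m + 1) ≤ PP k hk n m' := PP_mono k hk n h
  have := PP_succ k hk n m
  have := nu_pos k hk n hn m
  omega

lemma PP_le_self (hn : ∀ i, 1 ≤ n i) (m : ℕ) : m ≤ PP k hk n m := by
  induction m with
  | zero => simp
  | succ m ih =>
      have := PP_succ k hk n m
      have := nu_pos k hk n hn m
      omega

lemma PP_add_k (m : ℕ) : PP k hk n (m + k) = PP k hk n m + PP k hk n k := by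
  induction m with
  | zero => simp [PP_zero]
  | succ m ih =>
      rw [show m + 1 + k = (m + k) + 1 by omega, PP_succ, ih, nu_period, PP_succ]
      omega

lemma blocks_length : (blocks k n).length = k := by simp [blocks]

lemma block_len (i : Fin k) (hn : ∀ i, 1 ≤ n i) :
    (List.replicate (n i - 1) (0 : ℤ) ++ [1]).length = n i := by
  have := hn i
  simp; omega

/-- flattened prefix of the first `m` blocks -/
def FF (m : ℕ) : List ℤ := ((blocks k n).take m).flatten

lemma FF_succ (m : ℕ) (hm : m < k) :
    FF k n (m + 1) = FF k n m ++ (List.replicate (n ⟨m, hm⟩ - 1) (0 : ℤ) ++ [1]) := by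
  unfold FF
  rw [List.take_succ]
  have hm' : m < (blocks k n).length := by rw [blocks_length]; exact hm
  rw [List.getElem?_eq_getElem hm']
  rw [List.flatten_append]
  congr 1
  simp [blocks]

lemma FF_len (hn : ∀ i, 1 ≤ n i) (m : ℕ) (hm : m ≤ k) :
    (FF k n m).length = PP k hk n m := by
  induction m with
  | zero => simp [FF, PP_zero]
  | succ m ih =>
      have hmk : m < k := hm
      rw [FF_succ k n m hmk, List.length_append, ih (le_of_lt hmk),
        block_len k n _ hn, PP_succ, nu_eq k hk n m hmk]

lemma FF_k : FF k n k = L2 k n := by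
  unfold FF L2
  rw [List.take_of_length_le (le_of_eq (blocks_length k n))]

lemma L2_length (hn : ∀ i, 1 ≤ n i) : (L2 k n).length = PP k hk n k := by
  rw [← FF_k, FF_len k hk n hn k le_rfl]

lemma L2_decomp (m : ℕ) (hm : m < k) :
    L2 k n = FF k n m ++ ((List.replicate (n ⟨m, hm⟩ - 1) (0 : ℤ) ++ [1]) ++
      (((blocks k n).drop (m + 1)).flatten)) := by
  have hm' : m < (blocks k n).length := by rw [blocks_length]; exact hm
  have h1 : blocks k n = (blocks k n).take m ++ (blocks k n).drop m :=
    (List.take_append_drop m (blocks k n)).symm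
  have h2 : (blocks k n).drop m = (blocks k n)[m] :: (blocks k n).drop (m + 1) :=
    List.drop_eq_getElem_cons hm'
  have h3 : (blocks k n)[m] = List.replicate (n ⟨m, hm⟩ - 1) (0 : ℤ) ++ [1] := by
    simp [blocks]
  conv_lhs => rw [L2, h1]
  rw [List.flatten_append, h2, h3]
  rfl

lemma L2_getElem (hn : ∀ i, 1 ≤ n i) (m : ℕ) (hm : m < k) (r : ℕ)
    (hr : r < nu k hk n m) (h : PP k hk n m + r < (L2 k n).length) :
    (L2 k n)[PP k hk n m + r] = if r = nu k hk n m - 1 then 1 else 0 := by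
  have hnu : nu k hk n m = n ⟨m, hm⟩ := nu_eq k hk n m hm
  have hFlen : (FF k n m).length = PP k hk n m := FF_len k hk n hn m (le_of_lt hm)
  have hdec := L2_decomp k n m hm
  have hb : (List.replicate (n ⟨m, hm⟩ - 1) (0 : ℤ) ++ [1]).length = n ⟨m, hm⟩ :=
    block_len k n _ hn
  -- rewrite the getElem through the decomposition
  rw [List.getElem_of_eq hdec]
  have h1 : (FF k n m).length ≤ PP k hk n m + r := by omega
  rw [List.getElem_append_right h1]
  have hidx : PP k hk n m + r - (FF k n m).length = r := by omega
  have h2 : PP k hk n m + r - (FF k n m).length <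
      (List.replicate (n ⟨m, hm⟩ - 1) (0 : ℤ) ++ [1]).length := by
    rw [hb, hidx]; omega
  rw [List.getElem_append_left h2]
  have hrep : (List.replicate (n ⟨m, hm⟩ - 1) (0 : ℤ)).length = n ⟨m, hm⟩ - 1 := by simp
  by_cases hcase : r = nu k hk n m - 1
  · rw [if_pos hcase]
    have h3 : (List.replicate (n ⟨m, hm⟩ - 1) (0 : ℤ)).length ≤
        PP k hk n m + r - (FF k n m).length := by rw [hrep, hidx]; omega
    rw [List.getElem_append_right h3]
    simp
  · rw [if_neg hcase]
    have h4 : PP k hk n m + r - (FF k n m).length <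
        (List.replicate (n ⟨m, hm⟩ - 1) (0 : ℤ)).length := by rw [hrep, hidx]; omega
    rw [List.getElem_append_left h4]
    exact List.getElem_replicate _

/-- the periodic 0-1 word -/
def wt : ℕ → ℤ := fun t => (L2 k n).getD (t % PP k hk n k) 0

/-- counting function: number of ones among the first `x` letters -/
def Pi : ℕ → ℤ := fun x => ∑ t ∈ Finset.range x, wt k hk n t

lemma N_pos (hn : ∀ i, 1 ≤ n i) : 0 < PP k hk n k :=
  lt_of_lt_of_le hk (PP_le_self k hk n hn k)

lemma wt_eq_getElem (hn : ∀ i, 1 ≤ n i) (t : ℕ) (ht : t < PP k hk n k) :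
    wt k hk n t = (L2 k n)[t]'(by rw [L2_length k hk n hn]; exact ht) := by
  unfold wt
  rw [Nat.mod_eq_of_lt ht]
  exact List.getD_eq_getElem _ _ _

lemma wt01 (hn : ∀ i, 1 ≤ n i) (t : ℕ) : wt k hk n t = 0 ∨ wt k hk n t = 1 := by
  have ht : t % PP k hk n k < (L2 k n).length := by
    rw [L2_length k hk n hn]; exact Nat.mod_lt t (N_pos k hk n hn)
  unfold wt
  rw [List.getD_eq_getElem _ _ ht]
  have hmem : (L2 k n)[t % PP k hk n k] ∈ L2 k n := List.getElem_mem ht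
  unfold L2 at hmem
  rw [List.mem_flatten] at hmem
  obtain ⟨b, hb, hxb⟩ := hmem
  unfold blocks at hb
  rw [List.mem_ofFn] at hb
  obtain ⟨i, rfl⟩ := hb
  rw [List.mem_append] at hxb
  rcases hxb with hxb | hxb
  · left; exact List.eq_of_mem_replicate hxb
  · right; exact List.eq_of_mem_singleton hxb

lemma wt_period (t : ℕ) : wt k hk n (t + PP k hk n k) = wt k hk n t := by
  unfold wt; rw [Nat.add_mod_right]

lemma wt_block (hn : ∀ i, 1 ≤ n i) (m : ℕ) (hm : m < k) (r : ℕ) (hr : r < nu k hk n m) :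
    wt k hk n (PP k hk n m + r) = if r = nu k hk n m - 1 then 1 else 0 := by
  have hlt : PP k hk n m + r < PP k hk n k := by
    have h1 : PP k hk n m + r < PP k hk n (m + 1) := by
      rw [PP_succ]; omega
    have h2 : PP k hk n (m + 1) ≤ PP k hk n k := PP_mono k hk n hm
    omega
  rw [wt_eq_getElem k hk n hn _ hlt]
  exact L2_getElem k hk n hn m hm r hr _

lemma Pi_succ (x : ℕ) : Pi k hk n (x + 1) = Pi k hk n x + wt k hk n x := by
  simp [Pi, Finset.sum_range_succ]

lemma Pi_mono (hn : ∀ i, 1 ≤ n i) {x y : ℕ} (h : x ≤ y) : Pi k hk n x ≤ Pi k hk n y := by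
  unfold Pi
  refine Finset.sum_le_sum_of_subset_of_nonneg (Finset.range_subset_range.2 h) ?_
  intro t _ _
  rcases wt01 k hk n hn t with h0 | h1 <;> omega

lemma Pi_flat (hn : ∀ i, 1 ≤ n i) (m : ℕ) (hm : m < k) :
    ∀ r, r ≤ nu k hk n m - 1 → Pi k hk n (PP k hk n m + r) = Pi k hk n (PP k hk n m) := by
  intro r
  induction r with
  | zero => simp
  | succ r ih =>
      intro hr
      have hnu := nu_pos k hk n hn m
      rw [show PP k hk n m + (r + 1) = (PP k hk n m + r) + 1 by omega, Pi_succ,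
        ih (by omega), wt_block k hk n hn m hm r (by omega), if_neg (by omega)]
      ring

lemma Pi_PP_le (hn : ∀ i, 1 ≤ n i) (m : ℕ) (hm : m ≤ k) :
    Pi k hk n (PP k hk n m) = m := by
  induction m with
  | zero => simp [PP_zero, Pi]
  | succ m ih =>
      have hmk : m < k := hm
      have hnu := nu_pos k hk n hn m
      rw [PP_succ, show PP k hk n m + nu k hk n m = (PP k hk n m + (nu k hk n m - 1)) + 1 by omega,
        Pi_succ, Pi_flat k hk n hn m hmk _ le_rfl,
        wt_block k hk n hn m hmk _ (by omega), if_pos rfl, ih (by omega)]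
      push_cast; ring

lemma Pi_PP_pred_le (hn : ∀ i, 1 ≤ n i) (m : ℕ) (h1 : 1 ≤ m) (hm : m ≤ k) :
    Pi k hk n (PP k hk n m - 1) = (m : ℤ) - 1 := by
  obtain ⟨m', rfl⟩ : ∃ m', m = m' + 1 := ⟨m - 1, by omega⟩
  have hm' : m' < k := hm
  have hnu := nu_pos k hk n hn m'
  have heq : PP k hk n (m' + 1) - 1 = PP k hk n m' + (nu k hk n m' - 1) := by
    rw [PP_succ]; omega
  rw [heq, Pi_flat k hk n hn m' hm' _ le_rfl, Pi_PP_le k hk n hn m' (by omega)]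
  push_cast; ring

lemma sum_period (hn : ∀ i, 1 ≤ n i) (x : ℕ) :
    ∑ t ∈ Finset.range (PP k hk n k), wt k hk n (x + t) = k := by
  induction x with
  | zero =>
      simp only [Nat.zero_add]
      have : ∑ t ∈ Finset.range (PP k hk n k), wt k hk n t = Pi k hk n (PP k hk n k) := rfl
      rw [this, Pi_PP_le k hk n hn k le_rfl]
  | succ x ih =>
      rw [window (wt k hk n) (x + 1) (PP k hk n k)] at *
      have hw := wt_period k hk n x
      have e1 : x + 1 + PP k hk n k = (x + PP k hk n k) + 1 := by omega
      rw [e1]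
      rw [window (wt k hk n) x (PP k hk n k)] at ih
      have : (∑ t ∈ Finset.range (x + PP k hk n k + 1), wt k hk n t) =
          (∑ t ∈ Finset.range (x + PP k hk n k), wt k hk n t) + wt k hk n (x + PP k hk n k) :=
        Finset.sum_range_succ _ _
      rw [this, hw]
      have : (∑ t ∈ Finset.range (x + 1), wt k hk n t) =
          (∑ t ∈ Finset.range x, wt k hk n t) + wt k hk n x := Finset.sum_range_succ _ _
      rw [this]
      omega

lemma Pi_add_N (hn : ∀ i, 1 ≤ n i) (x : ℕ) :
    Pi k hk n (x + PP k hk n k) = Pi k hk n x + k := by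
  have := sum_period k hk n hn x
  rw [window (wt k hk n) x (PP k hk n k)] at this
  unfold Pi
  omega

lemma Pi_PP (hn : ∀ i, 1 ≤ n i) (m : ℕ) : Pi k hk n (PP k hk n m) = m := by
  induction m using Nat.strong_induction_on with
  | _ m ih =>
      by_cases h : m ≤ k
      · exact Pi_PP_le k hk n hn m h
      · push_neg at h
        have h2 : m - k < m := by omega
        rw [show m = (m - k) + k by omega, PP_add_k, Pi_add_N k hk n hn,
          ih _ h2]
        push_cast; omega

lemma Pi_PP_pred (hn : ∀ i, 1 ≤ n i) (m : ℕ) (h1 : 1 ≤ m) :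
    Pi k hk n (PP k hk n m - 1) = (m : ℤ) - 1 := by
  induction m using Nat.strong_induction_on with
  | _ m ih =>
      by_cases h : m ≤ k
      · exact Pi_PP_pred_le k hk n hn m h1 h
      · push_neg at h
        have h2 : m - k < m := by omega
        have h3 : 1 ≤ PP k hk n (m - k) := by
          have := PP_le_self k hk n hn (m - k); omega
        rw [show m = (m - k) + k by omega, PP_add_k,
          show PP k hk n (m - k) + PP k hk n k - 1 = (PP k hk n (m - k) - 1) + PP k hk n k by omega,
          Pi_add_N k hk n hn, ih _ h2 (by omega)]
        push_cast; omega

lemma G1 (hn : ∀ i, 1 ≤ n i) {m x : ℕ} (h : PP k hk n m ≤ x) :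
    (m : ℤ) ≤ Pi k hk n x := by
  rw [← Pi_PP k hk n hn m]
  exact Pi_mono k hk n hn h

lemma G2 (hn : ∀ i, 1 ≤ n i) {m x : ℕ} (h : x < PP k hk n m) :
    Pi k hk n x ≤ (m : ℤ) - 1 := by
  have hm : 1 ≤ m := by
    by_contra hm
    have : m = 0 := by omega
    rw [this, PP_zero] at h; omega
  calc Pi k hk n x ≤ Pi k hk n (PP k hk n m - 1) := Pi_mono k hk n hn (by omega)
    _ = (m : ℤ) - 1 := Pi_PP_pred k hk n hn m hm

lemma exists_idx (hn : ∀ i, 1 ≤ n i) (x : ℕ) :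
    ∃ m, PP k hk n m ≤ x ∧ x < PP k hk n (m + 1) := by
  induction x with
  | zero =>
      refine ⟨0, le_of_eq (PP_zero k hk n), ?_⟩
      have := PP_strict k hk n hn (show 0 < 0 + 1 by omega)
      rw [PP_zero] at this; omega
  | succ x ih =>
      obtain ⟨m, h1, h2⟩ := ih
      by_cases h : x + 1 < PP k hk n (m + 1)
      · exact ⟨m, by omega, h⟩
      · refine ⟨m + 1, by omega, ?_⟩
        have := PP_strict k hk n hn (show m + 1 < m + 1 + 1 by omega)
        omega

lemma Pi_idx (hn : ∀ i, 1 ≤ n i) {m x : ℕ} (h1 : PP k hk n m ≤ x)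
    (h2 : x < PP k hk n (m + 1)) : Pi k hk n x = m := by
  have := G1 k hk n hn h1
  have := G2 k hk n hn h2
  push_cast at *
  omega

lemma l1_getD (t : ℕ) :
    (List.ofFn fun i => (n i : ℤ)).getD (t % k) 0 = (nu k hk n t : ℤ) := by
  have ht : t % k < (List.ofFn fun i => (n i : ℤ)).length := by
    rw [List.length_ofFn]; exact Nat.mod_lt t hk
  rw [List.getD_eq_getElem _ _ ht, List.getElem_ofFn]
  rfl

lemma S1 (x c : ℕ) :
    ∑ t ∈ Finset.range c, (List.ofFn fun i => (n i : ℤ)).getD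
        ((x + t) % (List.ofFn fun i => (n i : ℤ)).length) 0
      = (PP k hk n (x + c) : ℤ) - PP k hk n x := by
  have hlen : (List.ofFn fun i => (n i : ℤ)).length = k := by simp
  rw [hlen]
  rw [Finset.sum_congr rfl (fun t _ => l1_getD k hk n (x + t))]
  rw [window (fun t => (nu k hk n t : ℤ)) x c]
  unfold PP
  push_cast
  ring

lemma S2 (hn : ∀ i, 1 ≤ n i) (x L : ℕ) :
    ∑ t ∈ Finset.range L, (L2 k n).getD ((x + t) % (L2 k n).length) 0
      = Pi k hk n (x + L) - Pi k hk n x := by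
  have hlen := L2_length k hk n hn
  have hterm : ∀ t, (L2 k n).getD ((x + t) % (L2 k n).length) 0 = wt k hk n (x + t) := by
    intro t; unfold wt; rw [hlen]
  rw [Finset.sum_congr rfl (fun t _ => hterm t)]
  exact window (wt k hk n) x L

lemma dirA (hn : ∀ i, 1 ≤ n i)
    (H : SmallVariationList (List.ofFn fun i => (n i : ℤ))) (L p q : ℕ) :
    Pi k hk n (p + L) - Pi k hk n p - (Pi k hk n (q + L) - Pi k hk n q) ≤ 1 := by
  by_contra hcon
  push_neg at hcon
  obtain ⟨i, hi1, hi2⟩ := exists_idx k hk n hn p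
  obtain ⟨j, hj1, hj2⟩ := exists_idx k hk n hn q
  have hip : Pi k hk n p = i := Pi_idx k hk n hn hi1 hi2
  have hjq : Pi k hk n q = j := Pi_idx k hk n hn hj1 hj2
  have hqm : Pi k hk n q ≤ Pi k hk n (q + L) := Pi_mono k hk n hn (by omega)
  obtain ⟨a, ha⟩ := Int.le.dest (le_of_eq_of_le hjq.symm hqm)
  have hpL : (i : ℤ) + a + 2 ≤ Pi k hk n (p + L) := by omega
  have h1 : PP k hk n (i + a + 2) ≤ p + L := by
    by_contra hx
    push_neg at hx
    have := G2 k hk n hn hx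
    push_cast at this
    omega
  have h2 : q + L + 1 ≤ PP k hk n (j + a + 1) := by
    by_contra hx
    push_neg at hx
    have := G1 k hk n hn (show PP k hk n (j + a + 1) ≤ q + L by omega)
    push_cast at this
    omega
  have H' := H a (i + 1) j
  rw [S1 k hk n, S1 k hk n] at H'
  have e1 : i + 1 + (a + 1) = i + a + 2 := by omega
  have e2 : j + (a + 1) = j + a + 1 := by omega
  rw [e1, e2, abs_le] at H'
  omega

lemma dirB (hn : ∀ i, 1 ≤ n i) (H : SmallVariationList (L2 k n)) (c i j : ℕ) :
    ((PP k hk n (i + c) : ℤ) - PP k hk n i) -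
      ((PP k hk n (j + c) : ℤ) - PP k hk n j) ≤ 1 := by
  by_contra hcon
  push_neg at hcon
  have hper1 : PP k hk n (j + k + c) = PP k hk n (j + c) + PP k hk n k := by
    rw [show j + k + c = (j + c) + k by omega, PP_add_k]
  have hper2 : PP k hk n (j + k) = PP k hk n j + PP k hk n k := PP_add_k k hk n j
  have hmono : PP k hk n (j + k) ≤ PP k hk n (j + k + c) := PP_mono k hk n (by omega)
  obtain ⟨A, hA⟩ := Nat.le.dest hmono
  have h1j : 1 ≤ PP k hk n (j + k) := by
    have := PP_le_self k hk n hn (j + k); omega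
  have hj'1 : 1 ≤ j + k := by omega
  have hc1 : Pi k hk n ((PP k hk n (j + k) - 1) + (A + 1)) -
      Pi k hk n (PP k hk n (j + k) - 1) = (j + k + c : ℤ) - ((j + k : ℤ) - 1) := by
    have e : (PP k hk n (j + k) - 1) + (A + 1) = PP k hk n (j + k + c) := by omega
    rw [e, Pi_PP k hk n hn, Pi_PP_pred k hk n hn (j + k) hj'1]
    push_cast
    ring
  have hlt : PP k hk n i + (A + 1) < PP k hk n (i + c) := by omega
  have hc2 : Pi k hk n (PP k hk n i + (A + 1)) - Pi k hk n (PP k hk n i) ≤ (c : ℤ) - 1 := by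
    have hg := G2 k hk n hn (m := i + c) hlt
    have hpi : Pi k hk n (PP k hk n i) = i := Pi_PP k hk n hn i
    push_cast at hg
    omega
  have H' := H A (PP k hk n (j + k) - 1) (PP k hk n i)
  rw [S2 k hk n hn, S2 k hk n hn, abs_le] at H'
  push_cast at hc1
  omega

end SV14

theorem stmt_14 (k : ℕ) (hk : 0 < k) (n : Fin k → ℕ) (hn : ∀ i, 1 ≤ n i) :
    SmallVariationList (List.ofFn (fun i => (n i : ℤ))) ↔
      SmallVariationList
        ((List.ofFn (fun i => List.replicate (n i - 1) (0 : ℤ) ++ [1])).flatten) := by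
  have hflat : ((List.ofFn (fun i => List.replicate (n i - 1) (0 : ℤ) ++ [1])).flatten)
      = SV14.L2 k n := rfl
  constructor
  · intro H s p q
    rw [hflat, SV14.S2 k hk n hn, SV14.S2 k hk n hn, abs_le]
    constructor
    · have := SV14.dirA k hk n hn H (s + 1) q p; omega
    · have := SV14.dirA k hk n hn H (s + 1) p q; omega
  · intro H s i j
    rw [hflat] at H
    rw [SV14.S1 k hk n, SV14.S1 k hk n, abs_le]
    constructor
    · have := SV14.dirB k hk n hn H (s + 1) j i; omega
    · have := SV14.dirB k hk n hn H (s + 1) i j; omega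
end

section
/- For each triple (x, y, m) of positive integers with gcd(x,y) = 1, there exists a unique (up to cyclic shift) primitive small-variation sequence over {m, m+1} in which m occurs exactly x times and m+1 occurs exactly y times. -/
/-- A list is *primitive* (as a necklace) if no cyclic shift of it is a
concatenation of at least two copies of a shorter list. -/
def PrimitiveList (l : List ℤ) : Prop :=
  ∀ (w : List ℤ) (t r : ℕ), 2 ≤ t → l.rotate r ≠ (List.replicate t w).flatten


private lemma emod_eq_of (n a b : ℤ) (h : n ∣ a - b) (h0 : 0 ≤ b) (h1 : b < n) : a % n = b := by
  obtain ⟨k, hk⟩ := h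
  have ha : a = b + n * k := by linarith
  rw [ha, Int.add_mul_emod_self_left, Int.emod_eq_of_lt h0 h1]

private lemma div_bound (n a L Y : ℕ) (hn : 0 < n) :
    a*Y/n + L*Y/n ≤ (a+L)*Y/n ∧ (a+L)*Y/n ≤ a*Y/n + L*Y/n + 1 := by
  have key : (a+L)*Y/n = (a*Y)/n + (L*Y)/n + if n ≤ a*Y % n + L*Y % n then 1 else 0 := by
    rw [add_mul, Nat.add_div hn]
  rw [key]; split <;> omega

private lemma ind_step (x y : ℕ) (hx : 0 < x) (hy : 0 < y) (i : ℕ) :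
    (i + 1) * y / (x + y) = i * y / (x + y) + (if x ≤ i * y % (x + y) then 1 else 0) := by
  have hn : 0 < x + y := by omega
  have key : (i+1) * y / (x+y) = (i*y)/(x+y) + y/(x+y)
      + if x+y ≤ i*y % (x+y) + y % (x+y) then 1 else 0 := by
    rw [add_mul, one_mul, Nat.add_div hn]
  have h4 : y / (x+y) = 0 := Nat.div_eq_of_lt (by omega)
  have h5 : y % (x+y) = y := Nat.mod_eq_of_lt (by omega)
  rw [key, h4, h5]
  by_cases h : x ≤ i*y % (x+y)
  · rw [if_pos h, if_pos (by omega)]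
  · rw [if_neg h, if_neg (by omega)]

private lemma countP_range_eq_sum (p : ℕ → Bool) (k : ℕ) :
    (List.range k).countP p = ∑ i ∈ Finset.range k, if p i then 1 else 0 := by
  induction k with
  | zero => simp
  | succ k ih =>
    rw [List.range_succ, List.countP_append, Finset.sum_range_succ, ih]
    simp [List.countP_cons]

private lemma length_split (m : ℤ) (l : List ℤ) (h : ∀ a ∈ l, a = m ∨ a = m+1) :
    l.length = l.count m + l.count (m+1) := by
  induction l with
  | nil => simp
  | cons a t ih =>
    have ht := ih (fun b hb => h b (List.mem_cons_of_mem a hb))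
    have ha := h a List.mem_cons_self
    rcases ha with ha | ha <;> subst ha <;>
      simp [List.count_cons, ht] <;> omega

private lemma sum_split (m : ℤ) (l : List ℤ) (h : ∀ a ∈ l, a = m ∨ a = m+1) :
    l.sum = l.count m * m + l.count (m+1) * (m+1) := by
  induction l with
  | nil => simp
  | cons a t ih =>
    have ht := ih (fun b hb => h b (List.mem_cons_of_mem a hb))
    have ha := h a List.mem_cons_self
    have hne : m ≠ m + 1 := by omega
    rcases ha with ha | ha <;> subst ha <;>
      simp [List.count_cons, ht, hne, Ne.symm hne] <;> ring

private lemma sum_getD (l : List ℤ) : ∑ i ∈ Finset.range l.length, l.getD i 0 = l.sum := by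
  induction l with
  | nil => simp
  | cons a t ih =>
    rw [List.length_cons, Finset.sum_range_succ']
    simp only [List.getD_cons_succ, List.getD_cons_zero, ih, List.sum_cons]
    ring


private def canon (x y : ℕ) (m : ℤ) : List ℤ :=
  (List.range (x + y)).map (fun i => if x ≤ i * y % (x + y) then m + 1 else m)

private lemma length_canon (x y : ℕ) (m : ℤ) : (canon x y m).length = x + y := by
  simp [canon]

private lemma canon_getElem (x y : ℕ) (m : ℤ) (i : ℕ) (h : i < (canon x y m).length) :
    (canon x y m)[i] = if x ≤ i * y % (x + y) then m + 1 else m := by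
  simp [canon]

private lemma canon_getD (x y : ℕ) (m : ℤ) (hn : 0 < x + y) (i : ℕ) :
    (canon x y m).getD (i % (x + y)) 0 = if x ≤ i * y % (x + y) then m + 1 else m := by
  have h : i % (x + y) < (canon x y m).length := by rw [length_canon]; exact Nat.mod_lt _ hn
  rw [List.getD_eq_getElem _ _ h, canon_getElem]
  rw [Nat.mod_mul_mod]

private lemma canon_mem (x y : ℕ) (m : ℤ) : ∀ a ∈ canon x y m, a = m ∨ a = m + 1 := by
  intro a ha
  simp only [canon, List.mem_map] at ha
  obtain ⟨i, -, rfl⟩ := ha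
  split <;> simp




private lemma sum_ind_eq (x y : ℕ) (hx : 0 < x) (hy : 0 < y) (k : ℕ) :
    ∑ i ∈ Finset.range k, (if x ≤ i * y % (x + y) then 1 else 0) = k * y / (x + y) := by
  induction k with
  | zero => simp
  | succ k ih => rw [Finset.sum_range_succ, ih, ind_step x y hx hy k]

private lemma canon_block (x y : ℕ) (m : ℤ) (hx : 0 < x) (hy : 0 < y) (i₀ L : ℕ) :
    ∑ t ∈ Finset.range L, (canon x y m).getD ((i₀ + t) % (x + y)) 0
      = L * m + (((i₀ + L) * y / (x + y) : ℕ) - ((i₀ * y / (x + y) : ℕ)) : ℤ) := by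
  have hn : 0 < x + y := by omega
  have hterm : ∀ t, (canon x y m).getD ((i₀ + t) % (x + y)) 0
      = m + ((((i₀ + t + 1) * y / (x + y) : ℕ) : ℤ) - (((i₀ + t) * y / (x + y) : ℕ) : ℤ)) := by
    intro t
    rw [canon_getD x y m hn, ind_step x y hx hy (i₀ + t)]
    split <;> push_cast <;> ring
  calc ∑ t ∈ Finset.range L, (canon x y m).getD ((i₀ + t) % (x + y)) 0
      = ∑ t ∈ Finset.range L, (m + ((((i₀ + t + 1) * y / (x + y) : ℕ) : ℤ)
          - (((i₀ + t) * y / (x + y) : ℕ) : ℤ))) := Finset.sum_congr rfl (fun t _ => hterm t)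
    _ = L * m + (((i₀ + L) * y / (x + y) : ℕ) - ((i₀ * y / (x + y) : ℕ)) : ℤ) := by
        rw [Finset.sum_add_distrib, Finset.sum_const, Finset.card_range]
        have := Finset.sum_range_sub (fun t => (((i₀ + t) * y / (x + y) : ℕ) : ℤ)) L
        simp only [← add_assoc] at this ⊢
        rw [this]
        simp [nsmul_eq_mul]

private lemma canon_sv (x y : ℕ) (m : ℤ) (hx : 0 < x) (hy : 0 < y) :
    ∀ (s i₀ j₀ : ℕ),
    |(∑ t ∈ Finset.range (s + 1), (canon x y m).getD ((i₀ + t) % (canon x y m).length) 0) -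
      (∑ t ∈ Finset.range (s + 1), (canon x y m).getD ((j₀ + t) % (canon x y m).length) 0)| ≤ 1 := by
  intro s i j
  have hn : 0 < x + y := by omega
  rw [length_canon, canon_block x y m hx hy, canon_block x y m hx hy]
  have b1 := div_bound (x+y) i (s+1) y hn
  have b2 := div_bound (x+y) j (s+1) y hn
  obtain ⟨b1a, b1b⟩ := b1
  obtain ⟨b2a, b2b⟩ := b2
  have c1a : ((i*y/(x+y) : ℕ) : ℤ) + (((s+1)*y/(x+y) : ℕ) : ℤ) ≤ (((i+(s+1))*y/(x+y) : ℕ) : ℤ) := by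
    exact_mod_cast b1a
  have c1b : (((i+(s+1))*y/(x+y) : ℕ) : ℤ) ≤ ((i*y/(x+y) : ℕ) : ℤ) + (((s+1)*y/(x+y) : ℕ) : ℤ) + 1 := by
    exact_mod_cast b1b
  have c2a : ((j*y/(x+y) : ℕ) : ℤ) + (((s+1)*y/(x+y) : ℕ) : ℤ) ≤ (((j+(s+1))*y/(x+y) : ℕ) : ℤ) := by
    exact_mod_cast b2a
  have c2b : (((j+(s+1))*y/(x+y) : ℕ) : ℤ) ≤ ((j*y/(x+y) : ℕ) : ℤ) + (((s+1)*y/(x+y) : ℕ) : ℤ) + 1 := by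
    exact_mod_cast b2b
  rw [abs_le]
  constructor <;> linarith

private lemma canon_count_one (x y : ℕ) (m : ℤ) (hx : 0 < x) (hy : 0 < y) :
    (canon x y m).count (m + 1) = y := by
  have hn : 0 < x + y := by omega
  have hne : m ≠ m + 1 := by omega
  rw [canon, List.count_eq_countP, List.countP_map]
  have hcong : (List.range (x+y)).countP
      ((fun a => a == m + 1) ∘ (fun i => if x ≤ i * y % (x + y) then m + 1 else m))
      = (List.range (x+y)).countP (fun i => decide (x ≤ i * y % (x + y))) := by
    apply List.countP_congr
    intro i _
    by_cases h : x ≤ i * y % (x + y) <;> simp [h, Function.comp, hne, Ne.symm hne]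
  rw [hcong, countP_range_eq_sum]
  simp only [decide_eq_true_eq]
  rw [sum_ind_eq x y hx hy (x + y), Nat.mul_div_cancel_left y hn]


private lemma prim_of_counts (x y : ℕ) (m : ℤ) (hx : 0 < x) (hy : 0 < y)
    (hxy : Nat.gcd x y = 1) (l : List ℤ)
    (hcm : l.count m = x) (hc1 : l.count (m+1) = y) :
    ∀ (w : List ℤ) (t r : ℕ), 2 ≤ t → l.rotate r ≠ (List.replicate t w).flatten := by
  intro w t r ht heq
  have h1 : x = t * w.count m := by
    rw [← hcm, ← (l.rotate_perm r).count_eq, heq, List.count_flatten, List.map_replicate,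
      List.sum_replicate, smul_eq_mul]
  have h2 : y = t * w.count (m+1) := by
    rw [← hc1, ← (l.rotate_perm r).count_eq, heq, List.count_flatten, List.map_replicate,
      List.sum_replicate, smul_eq_mul]
  have hd : t ∣ Nat.gcd x y := Nat.dvd_gcd ⟨_, h1⟩ ⟨_, h2⟩
  rw [hxy] at hd
  have := Nat.le_of_dvd one_pos hd
  omega










private lemma unique_aux (x y : ℕ) (m : ℤ) (hx : 0 < x) (hy : 0 < y)
    (hxy : Nat.gcd x y = 1) (l' : List ℤ)
    (hmem : ∀ a ∈ l', a = m ∨ a = m + 1) (hcm : l'.count m = x) (hc1 : l'.count (m+1) = y)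
    (hsv : SmallVariationList l') :
    ∃ r : ℕ, l' = (canon x y m).rotate r := by
  have hn : 0 < x + y := by omega
  have hnz : ((x + y : ℕ) : ℤ) ≠ 0 := by exact_mod_cast hn.ne'
  have hn1 : (1 : ℤ) ≤ ((x + y : ℕ) : ℤ) := by exact_mod_cast hn
  have hlen : l'.length = x + y := by rw [length_split m l' hmem, hcm, hc1]
  obtain ⟨S, hS⟩ : ∃ S : ℕ → ℤ, ∀ k, S k = ∑ t ∈ Finset.range k, l'.getD (t % (x+y)) 0 :=
    ⟨_, fun _ => rfl⟩
  have hA01 : ∀ i : ℕ, l'.getD (i % (x+y)) 0 = m ∨ l'.getD (i % (x+y)) 0 = m + 1 := by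
    intro i
    have h : i % (x+y) < l'.length := by rw [hlen]; exact Nat.mod_lt _ hn
    rw [List.getD_eq_getElem _ _ h]
    exact hmem _ (List.getElem_mem h)
  have hwin : ∀ a L : ℕ, S (a+L) - S a = ∑ t ∈ Finset.range L, l'.getD ((a+t) % (x+y)) 0 := by
    intro a L
    rw [hS, hS, Finset.sum_range_add]; ring
  have hsv' : ∀ s i j : ℕ,
      |(S (i+(s+1)) - S i) - (S (j+(s+1)) - S j)| ≤ 1 := by
    intro s i j
    rw [hwin, hwin]
    have := hsv s i j
    rwa [hlen] at this
  have hSn : S (x+y) = ((x+y : ℕ) : ℤ) * m + y := by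
    rw [hS]
    have h1 : ∀ t ∈ Finset.range (x+y), l'.getD (t % (x+y)) 0 = l'.getD t 0 := by
      intro t ht
      rw [Nat.mod_eq_of_lt (Finset.mem_range.mp ht)]
    have hsg : ∑ i ∈ Finset.range (x+y), l'.getD i 0 = l'.sum := by
      rw [← hlen]; exact sum_getD l'
    rw [Finset.sum_congr rfl h1, hsg, sum_split m l' hmem, hcm, hc1]
    push_cast; ring
  have hwinper : ∀ k : ℕ, S (k + (x+y)) - S k = S (x+y) := by
    intro k
    induction k with
    | zero => rw [hS 0]; simp
    | succ k ih =>
      have e1 : S (k+1) = S k + l'.getD (k % (x+y)) 0 := by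
        rw [hS, hS, Finset.sum_range_succ]
      have e2 : S (k + (x+y) + 1) = S (k + (x+y)) + l'.getD ((k + (x+y)) % (x+y)) 0 := by
        rw [hS, hS, Finset.sum_range_succ]
      have e3 : (k + (x+y)) % (x+y) = k % (x+y) := Nat.add_mod_right k (x+y)
      have e4 : k + 1 + (x+y) = k + (x+y) + 1 := by omega
      rw [e4, e2, e3, e1]
      linarith
  have hSper : ∀ k : ℕ, S (k + (x+y)) = S k + S (x+y) := by
    intro k; have := hwinper k; linarith
  obtain ⟨φ, hφ⟩ : ∃ φ : ℕ → ℤ,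
      ∀ i : ℕ, φ i = ((x+y:ℕ):ℤ) * S i - (i:ℤ) * (((x+y:ℕ):ℤ) * m + y) := ⟨_, fun _ => rfl⟩
  have hφper : ∀ i : ℕ, φ (i + (x+y)) = φ i := by
    intro i
    rw [hφ, hφ, hSper, hSn]; push_cast; ring
  have hφmul : ∀ t k : ℕ, φ (k + (x+y) * t) = φ k := by
    intro t
    induction t with
    | zero => simp
    | succ t ih =>
      intro k
      have : k + (x+y) * (t+1) = (k + (x+y) * t) + (x+y) := by ring
      rw [this, hφper, ih]
  have hφmod : ∀ i : ℕ, φ (i % (x+y)) = φ i := by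
    intro i
    conv_rhs => rw [← Nat.mod_add_div i (x+y)]
    exact (hφmul _ _).symm
  -- window invariance under mod
  have hwm : ∀ a L : ℕ, S (a % (x+y) + L) - S (a % (x+y)) = S (a + L) - S a := by
    intro a L
    rw [hwin, hwin]
    apply Finset.sum_congr rfl
    intro t _
    congr 1
    conv_rhs => rw [← Nat.mod_add_div a (x+y)]
    rw [Nat.add_right_comm, Nat.add_mul_mod_self_left]
  -- total of all windows of length L
  have hsum : ∀ s : ℕ, ∑ j ∈ Finset.range (x+y), (S (j+(s+1)) - S j)
      = ((s+1 : ℕ) : ℤ) * S (x+y) := by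
    intro s
    calc ∑ j ∈ Finset.range (x+y), (S (j+(s+1)) - S j)
        = ∑ j ∈ Finset.range (x+y), ∑ t ∈ Finset.range (s+1), l'.getD ((j+t) % (x+y)) 0 :=
          Finset.sum_congr rfl (fun j _ => hwin j (s+1))
      _ = ∑ t ∈ Finset.range (s+1), ∑ j ∈ Finset.range (x+y), l'.getD ((j+t) % (x+y)) 0 :=
          Finset.sum_comm
      _ = ∑ t ∈ Finset.range (s+1), S (x+y) := by
          apply Finset.sum_congr rfl
          intro t _
          have : ∑ j ∈ Finset.range (x+y), l'.getD ((j+t) % (x+y)) 0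
              = ∑ j ∈ Finset.range (x+y), l'.getD ((t+j) % (x+y)) 0 := by
            apply Finset.sum_congr rfl; intro j _; rw [Nat.add_comm]
          rw [this, ← hwin t (x+y)]
          have := hwinper t
          have e : t + (x+y) = t + (x+y) := rfl
          linarith [hwinper t]
      _ = ((s+1 : ℕ) : ℤ) * S (x+y) := by
          rw [Finset.sum_const, Finset.card_range]; push_cast; ring
  have hbd : ∀ i L : ℕ, |φ (i + L) - φ i| ≤ ((x+y:ℕ):ℤ) - 1 := by
    intro i L
    rcases L with _ | s
    · simp; linarith
    · have hiv : S (i % (x+y) + (s+1)) - S (i % (x+y)) = S (i + (s+1)) - S i := hwm i (s+1)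
      have hval : φ (i + (s+1)) - φ i
          = ((x+y:ℕ):ℤ) * (S (i % (x+y) + (s+1)) - S (i % (x+y))) - ((s+1:ℕ):ℤ) * S (x+y) := by
        rw [hiv, hφ, hφ, hSn]; push_cast; ring
      have hmem' : i % (x+y) ∈ Finset.range (x+y) := Finset.mem_range.mpr (Nat.mod_lt _ hn)
      -- upper bound
      have hup : ((x+y:ℕ):ℤ) * (S (i % (x+y) + (s+1)) - S (i % (x+y)))
          ≤ ((s+1:ℕ):ℤ) * S (x+y) + ((x+y:ℕ):ℤ) - 1 := by
        have h1 : ∀ j ∈ Finset.range (x+y),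
            (0:ℤ) ≤ (S (j+(s+1)) - S j) - (S (i % (x+y) + (s+1)) - S (i % (x+y))) + 1 := by
          intro j _
          have := abs_le.mp (hsv' s j (i % (x+y)))
          linarith [this.1]
        have h2 := Finset.single_le_sum h1 hmem'
        have h3 : ∑ j ∈ Finset.range (x+y),
            ((S (j+(s+1)) - S j) - (S (i % (x+y) + (s+1)) - S (i % (x+y))) + 1)
            = ((s+1:ℕ):ℤ) * S (x+y)
              - ((x+y:ℕ):ℤ) * (S (i % (x+y) + (s+1)) - S (i % (x+y))) + ((x+y:ℕ):ℤ) := by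
          rw [Finset.sum_add_distrib, Finset.sum_sub_distrib, hsum s, Finset.sum_const,
            Finset.sum_const, Finset.card_range]
          push_cast; ring
        rw [h3] at h2
        simp only [sub_self, zero_add] at h2
        linarith
      have hlo : ((s+1:ℕ):ℤ) * S (x+y)
          ≤ ((x+y:ℕ):ℤ) * (S (i % (x+y) + (s+1)) - S (i % (x+y))) + ((x+y:ℕ):ℤ) - 1 := by
        have h1 : ∀ j ∈ Finset.range (x+y),
            (0:ℤ) ≤ (S (i % (x+y) + (s+1)) - S (i % (x+y))) - (S (j+(s+1)) - S j) + 1 := by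
          intro j _
          have := abs_le.mp (hsv' s (i % (x+y)) j)
          linarith [this.2]
        have h2 := Finset.single_le_sum h1 hmem'
        have h3 : ∑ j ∈ Finset.range (x+y),
            ((S (i % (x+y) + (s+1)) - S (i % (x+y))) - (S (j+(s+1)) - S j) + 1)
            = ((x+y:ℕ):ℤ) * (S (i % (x+y) + (s+1)) - S (i % (x+y)))
              - ((s+1:ℕ):ℤ) * S (x+y) + ((x+y:ℕ):ℤ) := by
          rw [Finset.sum_add_distrib, Finset.sum_sub_distrib, hsum s, Finset.sum_const,
            Finset.sum_const, Finset.card_range]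
          push_cast; ring
        rw [h3] at h2
        simp only [sub_self, zero_add] at h2
        linarith
      rw [hval, abs_le]
      constructor <;> linarith
  have hbd2 : ∀ p q : ℕ, |φ p - φ q| ≤ ((x+y:ℕ):ℤ) - 1 := by
    intro p q
    rcases le_total q p with h | h
    · obtain ⟨L, rfl⟩ := Nat.le.dest h
      exact hbd q L
    · obtain ⟨L, rfl⟩ := Nat.le.dest h
      rw [abs_sub_comm]
      exact hbd p L
  obtain ⟨i₀, hi₀, hmin⟩ := Finset.exists_min_image (Finset.range (x+y)) φ
    ⟨0, Finset.mem_range.mpr hn⟩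
  have hcle : ∀ i : ℕ, φ i₀ ≤ φ i := by
    intro i
    rw [← hφmod i]
    exact hmin _ (Finset.mem_range.mpr (Nat.mod_lt _ hn))
  have hub : ∀ i : ℕ, φ i ≤ φ i₀ + (((x+y:ℕ):ℤ) - 1) := by
    intro i
    have := abs_le.mp (hbd2 i i₀)
    linarith [this.2]
  have hdvd : ∀ i : ℕ, ((x+y:ℕ):ℤ) ∣ φ i + (i:ℤ) * y := by
    intro i
    exact ⟨S i - (i:ℤ) * m, by rw [hφ]; push_cast; ring⟩
  have hφeq : ∀ i : ℕ, φ i = φ i₀ + (-(i:ℤ) * y - φ i₀) % ((x+y:ℕ):ℤ) := by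
    intro i
    have h1 := hcle i
    have h2 := hub i
    have key : (-(i:ℤ) * y - φ i₀) % ((x+y:ℕ):ℤ) = φ i - φ i₀ := by
      apply emod_eq_of
      · have : (-(i:ℤ) * y - φ i₀) - (φ i - φ i₀) = -(φ i + (i:ℤ) * y) := by ring
        rw [this]
        exact (hdvd i).neg_right
      · linarith
      · linarith
    linarith
  have hAeq : ∀ i : ℕ, l'.getD (i % (x+y)) 0
      = if (-(i:ℤ) * y - φ i₀) % ((x+y:ℕ):ℤ) < y then m + 1 else m := by
    intro i
    have hSi : S (i+1) = S i + l'.getD (i % (x+y)) 0 := by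
      rw [hS, hS, Finset.sum_range_succ]
    have hstep : φ (i+1) - φ i = ((x+y:ℕ):ℤ) * (l'.getD (i % (x+y)) 0 - m) - y := by
      rw [hφ, hφ, hSi]; push_cast; ring
    have e1 := hφeq i
    have e2 := hφeq (i+1)
    set u := (-(i:ℤ) * y - φ i₀) % ((x+y:ℕ):ℤ) with hu
    set w := (-((i+1:ℕ):ℤ) * y - φ i₀) % ((x+y:ℕ):ℤ) with hw
    have hu0 : 0 ≤ u := Int.emod_nonneg _ hnz
    have hu1 : u < ((x+y:ℕ):ℤ) := Int.emod_lt_of_pos _ (by omega)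
    have hw0 : 0 ≤ w := Int.emod_nonneg _ hnz
    have hw1 : w < ((x+y:ℕ):ℤ) := Int.emod_lt_of_pos _ (by omega)
    have hrel : w - u = φ (i+1) - φ i := by rw [e1, e2]; push_cast; ring
    rcases hA01 i with h | h
    · rw [h] at hstep ⊢
      rw [if_neg]
      intro hcon
      have : φ (i+1) - φ i = -(y:ℤ) := by rw [hstep]; ring
      have hxy' : (0:ℤ) < y := by exact_mod_cast hy
      linarith [hrel, this]
    · rw [h] at hstep ⊢
      rw [if_pos]
      have : φ (i+1) - φ i = ((x+y:ℕ):ℤ) - y := by rw [hstep]; push_cast; ring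
      have hcast : ((x+y:ℕ):ℤ) = (x:ℤ) + y := by push_cast; ring
      linarith [hrel, this]
  -- choose the rotation amount
  have hcop : Nat.gcd y (x+y) = 1 := by
    rw [Nat.gcd_add_self_right, Nat.gcd_comm]
    exact hxy
  have hicop : IsCoprime ((y:ℕ):ℤ) ((x+y:ℕ):ℤ) := by
    rw [Int.isCoprime_iff_gcd_eq_one, Int.gcd_natCast_natCast]
    exact hcop
  obtain ⟨u, v, huv⟩ := hicop
  refine ⟨((φ i₀ - 1) * u % ((x+y:ℕ):ℤ)).toNat, ?_⟩
  set r := ((φ i₀ - 1) * u % ((x+y:ℕ):ℤ)).toNat with hrdef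
  have hr : (r : ℤ) = (φ i₀ - 1) * u % ((x+y:ℕ):ℤ) :=
    Int.toNat_of_nonneg (Int.emod_nonneg _ hnz)
  have hry : ((x+y:ℕ):ℤ) ∣ (r : ℤ) * y - (φ i₀ - 1) := by
    refine ⟨-(φ i₀ - 1) * v - ((φ i₀ - 1) * u / ((x+y:ℕ):ℤ)) * y, ?_⟩
    have e := Int.emod_add_mul_ediv ((φ i₀ - 1) * u) ((x+y:ℕ):ℤ)
    rw [hr]
    linear_combination (y:ℤ) * e + (φ i₀ - 1) * huv
  apply List.ext_getElem
  · rw [hlen, List.length_rotate, length_canon]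
  intro i h1 h2
  have hin : i < x + y := by rwa [hlen] at h1
  rw [List.getElem_rotate]
  simp only [length_canon]
  rw [canon_getElem, Nat.mod_mul_mod]
  have hL : l'[i] = l'.getD (i % (x+y)) 0 := by
    rw [Nat.mod_eq_of_lt hin]
    exact (List.getD_eq_getElem _ _ h1).symm
  rw [hL, hAeq i]
  have ev := Int.emod_add_mul_ediv ((i:ℤ) * y + (φ i₀ - 1)) ((x+y:ℕ):ℤ)
  set v' := ((i:ℤ) * y + (φ i₀ - 1)) % ((x+y:ℕ):ℤ) with hv'
  set q := ((i:ℤ) * y + (φ i₀ - 1)) / ((x+y:ℕ):ℤ) with hq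
  have hv0 : 0 ≤ v' := Int.emod_nonneg _ hnz
  have hvn : v' < ((x+y:ℕ):ℤ) := Int.emod_lt_of_pos _ (by omega)
  set wn := (i + r) * y % (x + y) with hwn
  have hwnlt : wn < x + y := Nat.mod_lt _ hn
  have d2 : ((x+y:ℕ):ℤ) ∣ ((i:ℤ)*y + (φ i₀ - 1)) - v' := ⟨q, by linear_combination -ev⟩
  have hnatmod : ((wn:ℕ):ℤ) = v' := by
    have step1 : ((wn : ℕ) : ℤ) = (((i+r)*y : ℕ) : ℤ) % ((x+y:ℕ):ℤ) := by
      rw [hwn]; push_cast; ring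
    rw [step1]
    apply emod_eq_of _ _ _ _ hv0 hvn
    have e3 : (((i+r)*y : ℕ):ℤ) - v'
        = ((r:ℤ)*y - (φ i₀ - 1)) + (((i:ℤ)*y + (φ i₀ - 1)) - v') := by push_cast; ring
    rw [e3]
    exact dvd_add hry d2
  have hintmod : (-(i:ℤ)*y - φ i₀) % ((x+y:ℕ):ℤ) = ((x+y:ℕ):ℤ) - 1 - v' := by
    apply emod_eq_of
    · exact ⟨-1 - q, by linear_combination ev⟩
    · linarith
    · linarith
  rw [hintmod]
  have hiff : (((x+y:ℕ):ℤ) - 1 - v' < y) ↔ (x ≤ wn) := by omega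
  rw [if_congr hiff rfl rfl]


theorem stmt_15 (x y : ℕ) (m : ℤ) (hx : 0 < x) (hy : 0 < y) (hm : 0 < m)
    (hxy : Nat.gcd x y = 1) :
    ∃ l : List ℤ,
      ((∀ a ∈ l, a = m ∨ a = m + 1) ∧ l.count m = x ∧ l.count (m + 1) = y ∧
        SmallVariationList l ∧ PrimitiveList l) ∧
      ∀ l' : List ℤ,
        ((∀ a ∈ l', a = m ∨ a = m + 1) ∧ l'.count m = x ∧ l'.count (m + 1) = y ∧
          SmallVariationList l' ∧ PrimitiveList l') →
        ∃ r : ℕ, l' = l.rotate r := by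
  have hc1 : (canon x y m).count (m + 1) = y := canon_count_one x y m hx hy
  have hcm : (canon x y m).count m = x := by
    have hl := length_split m (canon x y m) (canon_mem x y m)
    rw [length_canon, hc1] at hl
    omega
  refine ⟨canon x y m, ⟨canon_mem x y m, hcm, hc1, ?_, ?_⟩, ?_⟩
  · intro s i j
    exact canon_sv x y m hx hy s i j
  · intro w t r ht
    exact prim_of_counts x y m hx hy hxy (canon x y m) hcm hc1 w t r ht
  · rintro l' ⟨hmem, hcm', hc1', hsv, -⟩
    exact unique_aux x y m hx hy hxy l' hmem hcm' hc1' hsv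
end

section
/- Let ξ = 3+√5, ξ̄ = 3−√5, and for S ⊆ {1,...,k} let r(S) be as defined (sum over runs of S and Sᶜ of run-length minus one; r(∅) = r(full set) = k). Then for all n₁,...,n_k ≥ 0, trace(L(LR)^{n₁}R ⋯ L(LR)^{n_k}R) = (1/(10^k·2^{n₁+⋯+n_k})) · Σ_{S⊆{1,...,k}} 3^{r(S)}·2^{k−r(S)}·(ξ+2)^{|S|}·(ξ̄+2)^{|Sᶜ|}·ξ^{Σ_{i∈S}n_i}·ξ̄^{Σ_{i∈Sᶜ}n_i}, where L = [[1,1],[0,1]] and R = [[1,0],[1,1]]. -/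
open Matrix Real

noncomputable section

variable {k : ℕ} [NeZero k]

/-- Starting points of runs (maximal cyclically-consecutive blocks) of `S ⊆ Fin k`. -/
def runStarts (S : Finset (Fin k)) : Finset (Fin k) :=
  S.filter (fun i => i - 1 ∉ S)

/-- The run statistic `r(S)`: the sum over all runs `s` of `S` and of `Sᶜ` of
`|s| - 1` (equal to `|S| - #runs(S) + |Sᶜ| - #runs(Sᶜ)` since runs partition),
with the convention `r(∅) = r(univ) = k`. -/
def rStat (S : Finset (Fin k)) : ℕ :=
  if S = ∅ ∨ S = Finset.univ then k
  else (S.card - (runStarts S).card) + (Sᶜ.card - (runStarts Sᶜ).card)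

/-! ### Auxiliary lemmas -/

lemma prod_entry (m : ℕ) (f : Fin m → Matrix (Fin 2) (Fin 2) ℝ) (a b : Fin 2) :
    (List.ofFn f).prod a b =
      ∑ ε : Fin m → Fin 2,
        if (Fin.cons a ε : Fin (m+1) → Fin 2) (Fin.last m) = b then
          ∏ i : Fin m, f i ((Fin.cons a ε : Fin (m+1) → Fin 2) i.castSucc)
            ((Fin.cons a ε : Fin (m+1) → Fin 2) i.succ)
        else 0 := by
  induction m generalizing a with
  | zero =>
      simp [List.ofFn_zero, Matrix.one_apply]
  | succ m ih =>
      rw [List.ofFn_succ, List.prod_cons, Matrix.mul_apply]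
      rw [← (Fin.consEquiv (fun _ : Fin (m+1) => Fin 2)).sum_comp]
      rw [Fintype.sum_prod_type]
      refine Finset.sum_congr rfl fun c _ => ?_
      rw [ih (fun i => f i.succ) c, Finset.mul_sum]
      refine Finset.sum_congr rfl fun ε _ => ?_
      have hc : ((Fin.consEquiv (fun _ : Fin (m+1) => Fin 2)) (c, ε) : Fin (m+1) → Fin 2)
          = Fin.cons c ε := rfl
      rw [hc]
      have hlast : (Fin.cons a (Fin.cons c ε) : Fin (m+2) → Fin 2) (Fin.last (m+1))
          = (Fin.cons c ε : Fin (m+1) → Fin 2) (Fin.last m) := by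
        rw [← Fin.succ_last, Fin.cons_succ]
      rw [hlast, mul_ite, mul_zero]
      congr 1
      rw [Fin.prod_univ_succ]
      congr 1

def shiftEquiv (m : ℕ) : (Fin (m+1) → Fin 2) ≃ (Fin (m+1) → Fin 2) where
  toFun ε := fun j => ε (j + 1)
  invFun ε := fun j => ε (j - 1)
  left_inv ε := by funext j; simp
  right_inv ε := by funext j; simp

lemma trace_prod_cyclic (m : ℕ) (f : Fin (m+1) → Matrix (Fin 2) (Fin 2) ℝ) :
    Matrix.trace (List.ofFn f).prod =
      ∑ ε : Fin (m+1) → Fin 2, ∏ i : Fin (m+1), f i (ε i) (ε (i + 1)) := by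
  have htr : Matrix.trace (List.ofFn f).prod = ∑ a, (List.ofFn f).prod a a := rfl
  rw [htr]
  simp only [prod_entry]
  rw [Finset.sum_comm]
  have hstep : ∀ ε' : Fin (m+1) → Fin 2,
      (∑ a : Fin 2, if (Fin.cons a ε' : Fin (m+2) → Fin 2) (Fin.last (m+1)) = a then
          ∏ i : Fin (m+1), f i ((Fin.cons a ε' : Fin (m+2) → Fin 2) i.castSucc)
            ((Fin.cons a ε' : Fin (m+2) → Fin 2) i.succ)
        else 0)
      = ∏ i : Fin (m+1), f i
          ((Fin.cons (ε' (Fin.last m)) ε' : Fin (m+2) → Fin 2) i.castSucc)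
          ((Fin.cons (ε' (Fin.last m)) ε' : Fin (m+2) → Fin 2) i.succ) := by
    intro ε'
    have hc : ∀ a : Fin 2, (Fin.cons a ε' : Fin (m+2) → Fin 2) (Fin.last (m+1)) = ε' (Fin.last m) := by
      intro a; rw [← Fin.succ_last, Fin.cons_succ]
    simp only [hc]
    rw [Finset.sum_ite_eq Finset.univ (ε' (Fin.last m))]
    simp
  simp only [hstep]
  refine (Fintype.sum_equiv (shiftEquiv m) _ _ ?_).symm
  intro ε
  have hlast : (shiftEquiv m ε) (Fin.last m) = ε 0 := by
    show ε (Fin.last m + 1) = ε 0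
    rw [Fin.last_add_one]
  refine Finset.prod_congr rfl fun i _ => ?_
  congr 1
  case _ =>
    symm
    induction i using Fin.cases with
    | zero => simp [hlast]
    | succ j =>
        rw [← Fin.succ_castSucc, Fin.cons_succ]
        show ε (j.castSucc + 1) = ε j.succ
        rw [Fin.coeSucc_eq_succ]

/-! ### The explicit diagonalization -/

noncomputable def s5 : ℝ := Real.sqrt 5
lemma s5_sq : s5 * s5 = 5 := Real.mul_self_sqrt (by norm_num)

def Pm : Matrix (Fin 2) (Fin 2) ℝ := !![2, -2; s5 - 1, 1 + s5]
def Pim : Matrix (Fin 2) (Fin 2) ℝ := !![(5+s5)/20, s5/10; -((5-s5)/20), s5/10]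
def Cm : Matrix (Fin 2) (Fin 2) ℝ :=
  !![3*(5+s5)/10, 2*(5+s5)/10; 2*(5-s5)/10, 3*(5-s5)/10]
def dv : Fin 2 → ℝ := ![(3+s5)/2, (3-s5)/2]
def yv : Fin 2 → ℝ := ![(5+s5)/10, (5-s5)/10]
def Lim : Matrix (Fin 2) (Fin 2) ℝ := !![1,-1;0,1]

lemma s5_pos : (0:ℝ) < s5 := Real.sqrt_pos.2 (by norm_num)

lemma Pim_Pm : Pim * Pm = 1 := by
  have h := s5_sq
  ext i j
  fin_cases i <;> fin_cases j <;>
    simp [Pim, Pm, Matrix.mul_apply, Fin.sum_univ_two, Matrix.one_apply] <;> nlinarith [h]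

lemma Pm_Pim : Pm * Pim = 1 := by
  have h := s5_sq
  have h0 := s5_pos
  ext i j
  fin_cases i <;> fin_cases j <;>
    simp [Pim, Pm, Matrix.mul_apply, Fin.sum_univ_two, Matrix.one_apply] <;> nlinarith [h]

lemma Lim_Lm : Lim * Lm = 1 := by
  ext i j; fin_cases i <;> fin_cases j <;>
    simp [Lim, Lm, Matrix.mul_apply, Fin.sum_univ_two, Matrix.one_apply]

lemma Lm_Lim : Lm * Lim = 1 := by
  ext i j; fin_cases i <;> fin_cases j <;>
    simp [Lim, Lm, Matrix.mul_apply, Fin.sum_univ_two, Matrix.one_apply]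

lemma diag_dv : (Matrix.diagonal dv : Matrix (Fin 2) (Fin 2) ℝ) = !![(3+s5)/2, 0; 0, (3-s5)/2] := by
  ext i j; fin_cases i <;> fin_cases j <;> simp [dv, Matrix.diagonal_apply]

lemma LR_eig : Lm * Rm = Pm * Matrix.diagonal dv * Pim := by
  have h := s5_sq
  rw [diag_dv]
  ext i j
  fin_cases i <;> fin_cases j <;>
    simp [Lm, Rm, Pm, Pim, dv, Matrix.mul_apply, Fin.sum_univ_two, Matrix.diagonal_apply,
      Matrix.vecHead, Matrix.vecTail, Function.comp] <;>
    nlinarith [h]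

lemma RL_conj : Pim * (Rm * Lm) * Pm = Cm := by
  have h := s5_sq
  ext i j
  fin_cases i <;> fin_cases j <;>
    simp [Lm, Rm, Pm, Pim, Cm, Matrix.mul_apply, Fin.sum_univ_two] <;>
    nlinarith [h]

lemma pow_LR (n : ℕ) :
    (Lm * Rm) ^ n = Pm * Matrix.diagonal (fun a => dv a ^ n) * Pim := by
  induction n with
  | zero =>
      simp only [pow_zero]
      have h1 : (Matrix.diagonal (fun _ : Fin 2 => (1:ℝ)) : Matrix (Fin 2) (Fin 2) ℝ) = 1 := by
        ext i j; fin_cases i <;> fin_cases j <;> simp [Matrix.diagonal_apply, Matrix.one_apply]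
      rw [h1, mul_one, Pm_Pim]
  | succ n ih =>
      rw [pow_succ, ih, LR_eig]
      have hPiP : ∀ X : Matrix (Fin 2) (Fin 2) ℝ, Pim * (Pm * X) = X := fun X => by
        rw [← mul_assoc, Pim_Pm, one_mul]
      simp only [mul_assoc, hPiP]
      rw [← mul_assoc (Matrix.diagonal fun a => dv a ^ n) (Matrix.diagonal dv),
        Matrix.diagonal_mul_diagonal]
      have hfun : (fun i => dv i ^ n * dv i) = fun a => dv a ^ (n+1) := by
        funext a; rw [pow_succ]
      rw [hfun]

lemma key_conj (n : ℕ) :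
    Lm * (Lm * Rm) ^ n * Rm =
      (Lm * Pm) * (Matrix.diagonal (fun a => dv a ^ n) * Cm) * (Pim * Lim) := by
  rw [pow_LR, ← RL_conj]
  have hPP : ∀ X : Matrix (Fin 2) (Fin 2) ℝ, Pm * (Pim * X) = X := fun X => by
    rw [← mul_assoc, Pm_Pim, one_mul]
  simp only [mul_assoc, hPP, Lm_Lim, mul_one]

lemma conj_ofFn_prod (m : ℕ) (Q Qi : Matrix (Fin 2) (Fin 2) ℝ)
    (h1 : Q * Qi = 1) (h2 : Qi * Q = 1) (W : Fin m → Matrix (Fin 2) (Fin 2) ℝ) :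
    (List.ofFn (fun i => Q * W i * Qi)).prod = Q * (List.ofFn W).prod * Qi := by
  induction m with
  | zero => simp [h1]
  | succ m ih =>
      rw [List.ofFn_succ, List.ofFn_succ, List.prod_cons, List.prod_cons,
        ih (fun i => W i.succ)]
      simp only [mul_assoc]
      rw [← mul_assoc Qi Q, h2, one_mul]

lemma trace_conj (Q Qi X : Matrix (Fin 2) (Fin 2) ℝ) (h2 : Qi * Q = 1) :
    Matrix.trace (Q * X * Qi) = Matrix.trace X := by
  rw [Matrix.trace_mul_comm, ← mul_assoc, h2, one_mul]

lemma Cm_apply (a b : Fin 2) : Cm a b = yv a * (if a = b then 3 else 2) := by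
  fin_cases a <;> fin_cases b <;> simp [Cm, yv] <;> ring

/-! ### Combinatorics of runs -/

lemma fin2_cases (x : Fin 2) : x = 0 ∨ x = 1 := by omega

lemma fin2_ne_zero {x : Fin 2} : x ≠ 0 ↔ x = 1 := by omega

lemma rStat_eq_sub (S : Finset (Fin k)) :
    rStat S = k - ((runStarts S).card + (runStarts Sᶜ).card) := by
  unfold rStat
  split
  · rename_i h
    rcases h with h | h
    · subst h
      simp [runStarts]
    · subst h
      simp [runStarts]
  · have h1 : (runStarts S).card ≤ S.card := Finset.card_le_card (Finset.filter_subset _ _)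
    have h2 : (runStarts Sᶜ).card ≤ Sᶜ.card := Finset.card_le_card (Finset.filter_subset _ _)
    have h3 : S.card + Sᶜ.card = k := by
      rw [Finset.card_add_card_compl, Fintype.card_fin]
    omega

lemma runStarts_card (ε : Fin k → Fin 2) (c : Fin 2) :
    (Finset.univ.filter (fun i => ε i ≠ c ∧ ε (i+1) = c)).card =
      (runStarts (Finset.univ.filter (fun i => ε i = c))).card := by
  refine Finset.card_bij (fun j _ => j + 1) ?_ ?_ ?_
  · intro a ha
    simp only [Finset.mem_filter, Finset.mem_univ, true_and] at ha ⊢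
    simp only [runStarts, Finset.mem_filter, Finset.mem_univ, true_and]
    refine ⟨ha.2, ?_⟩
    rw [add_sub_cancel_right]
    exact ha.1
  · intro a _ b _ h
    exact add_right_cancel h
  · intro b hb
    simp only [runStarts, Finset.mem_filter, Finset.mem_univ, true_and] at hb
    refine ⟨b - 1, ?_, sub_add_cancel b 1⟩
    simp only [Finset.mem_filter, Finset.mem_univ, true_and]
    exact ⟨hb.2, by rw [sub_add_cancel]; exact hb.1⟩

lemma same_pairs_card (ε : Fin k → Fin 2) :
    (Finset.univ.filter (fun i => ε i = ε (i+1))).card =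
      rStat (Finset.univ.filter (fun i => ε i = 0)) := by
  set S := Finset.univ.filter (fun i => ε i = 0) with hS
  have hcompl : Sᶜ = Finset.univ.filter (fun i => ε i = 1) := by
    ext i
    simp [hS, Finset.mem_filter, fin2_ne_zero]
  have hdiff : (Finset.univ.filter (fun i => ¬ (ε i = ε (i+1)))).card =
      (runStarts S).card + (runStarts Sᶜ).card := by
    have hsplit : (Finset.univ.filter (fun i => ¬ (ε i = ε (i+1)))) =
        (Finset.univ.filter (fun i => ε i ≠ 0 ∧ ε (i+1) = 0)) ∪
        (Finset.univ.filter (fun i => ε i ≠ 1 ∧ ε (i+1) = 1)) := by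
      rw [← Finset.filter_or]
      apply Finset.filter_congr
      intro i _
      rcases fin2_cases (ε i) with h | h <;> rcases fin2_cases (ε (i+1)) with h' | h' <;>
        simp [h, h']
    rw [hsplit, Finset.card_union_of_disjoint, runStarts_card, runStarts_card, hcompl]
    · rw [Finset.disjoint_filter]
      intro i _ hi hi2
      have h1 := hi.2
      have h2 := hi2.2
      omega
  have hpart : (Finset.univ.filter (fun i => ε i = ε (i+1))).card +
      (Finset.univ.filter (fun i => ¬ (ε i = ε (i+1)))).card = k := by
    rw [Finset.card_filter_add_card_filter_not, Finset.card_univ, Fintype.card_fin]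
  rw [rStat_eq_sub]
  omega

lemma rStat_le (ε : Fin k → Fin 2) :
    rStat (Finset.univ.filter (fun i => ε i = 0)) ≤ k := by
  rw [← same_pairs_card]
  calc (Finset.univ.filter (fun i => ε i = ε (i+1))).card
      ≤ Finset.univ.card := Finset.card_le_card (Finset.filter_subset _ _)
    _ = k := by rw [Finset.card_univ, Fintype.card_fin]

/-! ### The ε ↔ S correspondence -/

def epsEquiv (k : ℕ) : (Fin k → Fin 2) ≃ Finset (Fin k) where
  toFun ε := Finset.univ.filter (fun i => ε i = 0)
  invFun S := fun i => if i ∈ S then 0 else 1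
  left_inv ε := by
    funext i
    rcases fin2_cases (ε i) with h | h <;> simp [h]
  right_inv S := by
    ext i
    by_cases h : i ∈ S <;> simp [h]

/-! ### The per-term computation -/

lemma term_eq (m : ℕ) (n : Fin (m+1) → ℕ) (ε : Fin (m+1) → Fin 2) :
    (∏ i : Fin (m+1), (Matrix.diagonal (fun a => dv a ^ (n i)) * Cm) (ε i) (ε (i+1))) =
      (1 / (10 ^ (m+1) * 2 ^ (∑ i, n i))) *
        ((3 : ℝ) ^ (rStat (Finset.univ.filter (fun i => ε i = 0))) *
          2 ^ ((m+1) - rStat (Finset.univ.filter (fun i => ε i = 0))) *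
          ((3 + Real.sqrt 5) + 2) ^ (Finset.univ.filter (fun i => ε i = 0)).card *
          ((3 - Real.sqrt 5) + 2) ^ ((Finset.univ.filter (fun i => ε i = 0))ᶜ).card *
          (3 + Real.sqrt 5) ^ (∑ i ∈ Finset.univ.filter (fun i => ε i = 0), n i) *
          (3 - Real.sqrt 5) ^ (∑ i ∈ (Finset.univ.filter (fun i => ε i = 0))ᶜ, n i)) := by
  set S := Finset.univ.filter (fun i => ε i = 0) with hS
  have hmem : ∀ i, i ∈ S → ε i = 0 := by intro i hi; simpa [hS] using hi
  have hmemc : ∀ i, i ∈ Sᶜ → ε i = 1 := by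
    intro i hi
    simp only [hS, Finset.mem_compl, Finset.mem_filter, Finset.mem_univ, true_and] at hi
    omega
  simp only [Matrix.diagonal_mul, Cm_apply]
  rw [Finset.prod_mul_distrib, Finset.prod_mul_distrib]
  have hd : (∏ i, dv (ε i) ^ n i) =
      ((3+s5)/2) ^ (∑ i ∈ S, n i) * ((3-s5)/2) ^ (∑ i ∈ Sᶜ, n i) := by
    rw [← Finset.prod_mul_prod_compl S]
    congr 1
    · rw [← Finset.prod_pow_eq_pow_sum]
      exact Finset.prod_congr rfl fun i hi => by rw [hmem i hi]; simp [dv]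
    · rw [← Finset.prod_pow_eq_pow_sum]
      exact Finset.prod_congr rfl fun i hi => by rw [hmemc i hi]; simp [dv]
  have hy : (∏ i, yv (ε i)) = ((5+s5)/10) ^ S.card * ((5-s5)/10) ^ Sᶜ.card := by
    rw [← Finset.prod_mul_prod_compl S]
    congr 1
    · rw [← Finset.prod_const]
      exact Finset.prod_congr rfl fun i hi => by rw [hmem i hi]; simp [yv]
    · rw [← Finset.prod_const]
      exact Finset.prod_congr rfl fun i hi => by rw [hmemc i hi]; simp [yv]
  have hsame := same_pairs_card ε
  have hle := rStat_le ε
  rw [← hS] at hsame hle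
  have hm3 : (∏ i, (if ε i = ε (i+1) then (3:ℝ) else 2)) =
      3 ^ (rStat S) * 2 ^ ((m+1) - rStat S) := by
    rw [← Finset.prod_filter_mul_prod_filter_not Finset.univ (fun i => ε i = ε (i+1))]
    have hpart : (Finset.univ.filter (fun i => ε i = ε (i+1))).card +
        (Finset.univ.filter (fun i => ¬ (ε i = ε (i+1)))).card = m+1 := by
      rw [Finset.card_filter_add_card_filter_not, Finset.card_univ, Fintype.card_fin]
    congr 1
    · rw [← hsame, ← Finset.prod_const]
      exact Finset.prod_congr rfl fun i hi => if_pos (Finset.mem_filter.1 hi).2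
    · have hcard2 : (Finset.univ.filter (fun i => ¬ (ε i = ε (i+1)))).card
          = m + 1 - rStat S := by omega
      rw [← hcard2, ← Finset.prod_const]
      exact Finset.prod_congr rfl fun i hi => if_neg (Finset.mem_filter.1 hi).2
  rw [hd, hy, hm3]
  have hAB : (∑ i ∈ S, n i) + (∑ i ∈ Sᶜ, n i) = ∑ i, n i := Finset.sum_add_sum_compl S n
  have hk : S.card + Sᶜ.card = m+1 := by
    rw [Finset.card_add_card_compl, Fintype.card_fin]
  have h10 : (10:ℝ)^(m+1) = 10 ^ S.card * 10 ^ Sᶜ.card := by rw [← pow_add, hk]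
  rw [div_pow, div_pow, div_pow, div_pow, ← hAB, pow_add (2:ℝ), h10]
  simp only [s5]
  field_simp
  ring

theorem stmt_17 (n : Fin k → ℕ) :
    Matrix.trace (List.ofFn (fun i => Lm * (Lm * Rm) ^ (n i) * Rm)).prod =
      (1 / (10 ^ k * 2 ^ (∑ i, n i))) *
        ∑ S : Finset (Fin k),
          (3 : ℝ) ^ (rStat S) * 2 ^ (k - rStat S) *
            ((3 + Real.sqrt 5) + 2) ^ S.card * ((3 - Real.sqrt 5) + 2) ^ Sᶜ.card *
            (3 + Real.sqrt 5) ^ (∑ i ∈ S, n i) *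
            (3 - Real.sqrt 5) ^ (∑ i ∈ Sᶜ, n i) := by
  obtain ⟨m, rfl⟩ : ∃ m, k = m + 1 :=
    ⟨k - 1, (Nat.succ_pred_eq_of_pos (Nat.pos_of_ne_zero (NeZero.ne k))).symm⟩
  have h1 : (Lm * Pm) * (Pim * Lim) = 1 := by
    rw [mul_assoc, ← mul_assoc Pm Pim Lim, Pm_Pim, one_mul, Lm_Lim]
  have h2 : (Pim * Lim) * (Lm * Pm) = 1 := by
    rw [mul_assoc, ← mul_assoc Lim Lm Pm, Lim_Lm, one_mul, Pim_Pm]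
  have hconj : (List.ofFn fun i : Fin (m+1) => Lm * (Lm * Rm) ^ (n i) * Rm) =
      List.ofFn fun i : Fin (m+1) =>
        (Lm * Pm) * ((Matrix.diagonal fun a => dv a ^ n i) * Cm) * (Pim * Lim) := by
    simp only [key_conj]
  rw [hconj, conj_ofFn_prod _ _ _ h1 h2, trace_conj _ _ _ h2, trace_prod_cyclic,
    Finset.mul_sum]
  refine Fintype.sum_equiv (epsEquiv (m+1)) _ _ ?_
  intro ε
  exact term_eq m n ε
end
end
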